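/- Let q>1 be real, β,μ>0, and let Q(X),R(X) be complex polynomials with deg(R) ≥ deg(Q) and R(im) ≠ 0 for all m ∈ ℝ. Let b:ℝ→ℂ be continuous with |b(m)| ≤ 1/|R(im)| for all m ∈ ℝ, and assume μ > deg(Q)+1. Then there exists a constant C₂>0 (depending only on Q, R, μ) such that for all f,g ∈ E_{(β,μ)}, the function m ↦ b(m)∫_{-∞}^{+∞} f(m−m₁) Q(im₁) g(m₁) dm₁ belongs to E_{(β,μ)} and ‖ b(m)∫_{-∞}^{+∞} f(m−m₁)Q(im₁)g(m₁)dm₁ ‖_{(β,μ)} ≤ C₂ ‖f‖_{(β,μ)} ‖g‖_{(β,μ)}. -/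

import Mathlib

noncomputable section

open Complex MeasureTheory Set

namespace Paper

/-- The weight `(1+|m|)^μ e^{β|m|}` in the Fourier variable `m`. -/
def mWeight (β μ m : ℝ) : ℝ := (1 + |m|) ^ μ * Real.exp (β * |m|)

/-- The set of weighted values of `h`, whose supremum is the `E_{(β,μ)}`-norm. -/
def EnormSet (β μ : ℝ) (h : ℝ → ℂ) : Set ℝ :=
  {x | ∃ m : ℝ, x = mWeight β μ m * ‖(h m)‖}

/-- The norm of the Banach space `E_{(β,μ)}`. -/
def Enorm (β μ : ℝ) (h : ℝ → ℂ) : ℝ := sSup (EnormSet β μ h)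

/-- Membership in the Banach space `E_{(β,μ)}`. -/
def MemE (β μ : ℝ) (h : ℝ → ℂ) : Prop := Continuous h ∧ BddAbove (EnormSet β μ h)

/-- Open unbounded sector with vertex `0`, bisecting direction `d` and (half-)opening `op`. -/
def uSector (d op : ℝ) : Set ℂ :=
  {z | ∃ t θ : ℝ, 0 < t ∧ |θ - d| < op ∧ z = (t : ℂ) * Complex.exp (Complex.I * (θ : ℂ))}

/-- Bounded open sector with vertex `0`, direction `d`, opening `op` and radius `r`. -/
def bSector (d op r : ℝ) : Set ℂ :=
  {z | ∃ t θ : ℝ, 0 < t ∧ t < r ∧ |θ - d| < op ∧ z = (t : ℂ) * Complex.exp (Complex.I * (θ : ℂ))}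

/-- `q^x` (real power) viewed as a complex number. -/
def qc (q x : ℝ) : ℂ := ((q ^ x : ℝ) : ℂ)

/-- The weight `exp(-(k/2) log²|τ+δ|/log q - α log|τ+δ|)` (first family). -/
def tauWeight1 (q k α δ : ℝ) (τ : ℂ) : ℝ :=
  Real.exp (-(k / 2) * (Real.log (‖(τ + (δ : ℂ))‖)) ^ 2 / Real.log q
    - α * Real.log (‖(τ + (δ : ℂ))‖))

/-- The weight `exp(-(k/2) log²|τ|/log q - ν log|τ|)` (second family). -/
def tauWeight2 (q k ν : ℝ) (τ : ℂ) : ℝ :=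
  Real.exp (-(k / 2) * (Real.log (‖τ‖)) ^ 2 / Real.log q - ν * Real.log (‖τ‖))

/-- Weighted values of a function of `(τ,m)` over `Ω × ℝ`. -/
def ExpSet (β μ : ℝ) (w : ℂ → ℝ) (Ω : Set ℂ) (h : ℂ → ℝ → ℂ) : Set ℝ :=
  {x | ∃ τ ∈ Ω, ∃ m : ℝ, x = mWeight β μ m * w τ * ‖(h τ m)‖}

/-- Norm of the weighted Banach spaces `Exp^q_{(…)}`. -/
def ExpNorm (β μ : ℝ) (w : ℂ → ℝ) (Ω : Set ℂ) (h : ℂ → ℝ → ℂ) : ℝ := sSup (ExpSet β μ w Ω h)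

/-- Membership in the weighted Banach spaces `Exp^q_{(…)}`: continuity on `Ω × ℝ`,
holomorphy in `τ` on the open part `Ωo`, and finiteness of the weighted sup. -/
def MemExp (β μ : ℝ) (w : ℂ → ℝ) (Ω Ωo : Set ℂ) (h : ℂ → ℝ → ℂ) : Prop :=
  ContinuousOn (fun p : ℂ × ℝ => h p.1 p.2) (Ω ×ˢ (univ : Set ℝ)) ∧
  (∀ m : ℝ, DifferentiableOn ℂ (fun τ => h τ m) Ωo) ∧
  BddAbove (ExpSet β μ w Ω h)

/-- The convolution `f ⋆^P g (m) = ∫ f(m-m₁) P(im₁) g(m₁) dm₁`. -/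
def starQ (P : Polynomial ℂ) (f g : ℝ → ℂ) (m : ℝ) : ℂ :=
  ∫ m₁ : ℝ, f (m - m₁) * P.eval (Complex.I * (m₁ : ℂ)) * g m₁

/-- The `q`-convolution of order `k`:
`φ_k ⋆^P_{q;1/k} f = Σ_{h=0}^{p₁} τ^h/(q^{1/k})^{h(h-1)/2} ( c_h ⋆^P σ_{q,τ}^{-h/k} f )`. -/
def qConv (q k : ℝ) (p₁ : ℕ) (P : Polynomial ℂ) (c : ℕ → ℝ → ℂ) (f : ℂ → ℝ → ℂ)
    (τ : ℂ) (m : ℝ) : ℂ :=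
  ∑ h ∈ Finset.range (p₁ + 1),
    (τ ^ h / qc q (((h : ℝ) * ((h : ℝ) - 1)) / (2 * k))) *
      starQ P (c h) (fun m₁ => f (τ / qc q ((h : ℝ) / k)) m₁) m

/-- The Jacobi theta function `Θ_{q^{1/k}}(x) = Σ_{n ∈ ℤ} q^{-n(n-1)/(2k)} x^n`. -/
def theta (q k : ℝ) (x : ℂ) : ℂ :=
  ∑' n : ℤ, qc q (-(((n : ℝ) * ((n : ℝ) - 1)) / (2 * k))) * x ^ n

/-- The constant `π_{q^{1/k}} = (log q / k) Π_{n≥0} (1 - q^{-(n+1)/k})⁻¹`. -/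
def piq (q k : ℝ) : ℝ := (Real.log q / k) * ∏' n : ℕ, (1 - q ^ (-(((n : ℝ) + 1) / k)))⁻¹

/-- The point `t e^{i d}` of the half-line `L_d`. -/
def ray (d t : ℝ) : ℂ := (t : ℂ) * Complex.exp (Complex.I * (d : ℂ))

/-- The `q`-Laplace transform of order `k` along direction `d`:
`L^d_{q;1/k}(f)(T) = (1/π_{q^{1/k}}) ∫_{L_d} f(u)/Θ_{q^{1/k}}(u/T) du/u`. -/
def qLaplace {E : Type*} [NormedAddCommGroup E] [NormedSpace ℂ E]
    (q k d : ℝ) (f : ℂ → E) (T : ℂ) : E :=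
  ∫ t in Set.Ioi (0 : ℝ), (((piq q k : ℂ) * theta q k (ray d t / T) * (t : ℂ))⁻¹) • f (ray d t)

/-- The domain `R_{d,δ̃} = {T ≠ 0 : |1 + re^{id}/T| > δ̃ for all r ≥ 0}`. -/
def Rset (d δt : ℝ) : Set ℂ :=
  {T | T ≠ 0 ∧ ∀ r : ℝ, 0 ≤ r → δt < ‖(1 + ray d r / T)‖}

/-- The inverse Fourier transform `F⁻¹(g)(z) = (2π)^{-1/2} ∫ g(m) e^{izm} dm`. -/
def invFourier (g : ℝ → ℂ) (z : ℂ) : ℂ :=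
  (Real.sqrt (2 * Real.pi))⁻¹ * ∫ m : ℝ, g m * Complex.exp (Complex.I * z * (m : ℂ))

/-- The differential operator `P(∂_z)` applied to a function of `z`. -/
def Pdz (P : Polynomial ℂ) (f : ℂ → ℂ) (z : ℂ) : ℂ :=
  ∑ i ∈ Finset.range (P.natDegree + 1), P.coeff i * iteratedDeriv i f z

/-- The horizontal strip `H_b = {z : |Im z| < b}`. -/
def Hstrip (b : ℝ) : Set ℂ := {z | |z.im| < b}

/-- Good covering `(ℰ_p)_{0 ≤ p ≤ ς-1}` of the punctured neighbourhood of the origin. -/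
def IsGoodCovering (ς : ℕ) (ε₀ : ℝ) (E : ℕ → Set ℂ) : Prop :=
  2 ≤ ς ∧ 0 < ε₀ ∧
  (∀ p < ς, ∃ d op : ℝ, 0 < op ∧ E p = bSector d op ε₀) ∧
  (∀ j < ς, ∀ k < ς, (E j ∩ E k).Nonempty ↔ (j = k ∨ (j + 1) % ς = k ∨ (k + 1) % ς = j)) ∧
  (∃ U : Set ℂ, U ∈ nhds (0 : ℂ) ∧ (⋃ p ∈ Finset.range ς, E p) = U \ {0})

/-- `f : V → F` admits `Σ c_n ε^n` as `q`-Gevrey asymptotic expansion of order `1/k` on `V`. -/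
def HasQExp {F : Type*} [NormedAddCommGroup F] [NormedSpace ℂ F]
    (q k : ℝ) (V : Set ℂ) (f : ℂ → F) (c : ℕ → F) : Prop :=
  ∀ d op r : ℝ, 0 < op → 0 < r → closure (bSector d op r) \ {0} ⊆ V →
    ∃ A C : ℝ, 0 < A ∧ 0 < C ∧ ∀ ε ∈ bSector d op r, ∀ N : ℕ,
      ‖f ε - ∑ n ∈ Finset.range (N + 1), ε ^ n • c n‖
        ≤ C * A ^ (N + 1) * q ^ (((N : ℝ) * ((N : ℝ) + 1)) / (2 * k)) * ‖ε‖ ^ (N + 1)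

/-- `q`-Gevrey asymptotic expansion of order `1/k`, for functions with values in the Banach
space `𝔽` of bounded holomorphic functions on `T × H` (sup-norm expressed pointwise). -/
def HasQExpPt (q k : ℝ) (V T H : Set ℂ)
    (f : ℂ → ℂ → ℂ → ℂ) (c : ℕ → ℂ → ℂ → ℂ) : Prop :=
  ∀ d op r : ℝ, 0 < op → 0 < r → closure (bSector d op r) \ {0} ⊆ V →
    ∃ A C : ℝ, 0 < A ∧ 0 < C ∧ ∀ ε ∈ bSector d op r, ∀ N : ℕ, ∀ t ∈ T, ∀ z ∈ H,
      ‖(f t z ε - ∑ n ∈ Finset.range (N + 1), c n t z * ε ^ n)‖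
        ≤ C * A ^ (N + 1) * q ^ (((N : ℝ) * ((N : ℝ) + 1)) / (2 * k)) * ‖ε‖ ^ (N + 1)

/-- The roots `q_ℓ(m)` of the polynomial `P_{m,1}`. -/
def qroot1 (q : ℝ) (k₁ dD1 : ℕ) (Qp RD1 : Polynomial ℂ) (ℓ : ℕ) (m : ℝ) : ℂ :=
  Complex.exp (2 * (Real.pi : ℂ) * Complex.I * (ℓ : ℂ) / (dD1 : ℂ)) *
    (Qp.eval (Complex.I * (m : ℂ)) / RD1.eval (Complex.I * (m : ℂ))) ^ ((1 : ℂ) / (dD1 : ℂ)) *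
    qc q (((dD1 : ℝ) + 2 * (k₁ : ℝ) - 1) / (2 * (k₁ : ℝ)))

/-- Membership in the unbounded sector `{z : |z| ≥ r, |arg z - dd| ≤ νν}`. -/
def inSectorGE (dd νν r : ℝ) (z : ℂ) : Prop :=
  r ≤ ‖z‖ ∧
    ∃ θ : ℝ, |θ - dd| ≤ νν ∧ z = ((‖z‖ : ℝ) : ℂ) * Complex.exp (Complex.I * (θ : ℂ))

/-- The main `q`-difference-differential equation, at the point `(t,z,ε)`. -/
def mainEq (q : ℝ) (k₁ k₂ : ℕ) (dD1 dD2 D : ℕ) (d δ' Δ : ℕ → ℕ)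
    (Qp RD1 RD2 : Polynomial ℂ) (Rl : ℕ → Polynomial ℂ)
    (c : ℕ → ℂ → ℂ → ℂ → ℂ) (f : ℂ → ℂ → ℂ → ℂ) (u : ℂ → ℂ → ℂ → ℂ)
    (t z ε : ℂ) : Prop :=
  Pdz Qp (fun z' => u ((q : ℂ) * t) z' ε) z
    = (ε * t) ^ dD1 * Pdz RD1 (fun z' => u (qc q ((dD1 : ℝ) / (k₁ : ℝ) + 1) * t) z' ε) z
    + (ε * t) ^ dD2 * Pdz RD2 (fun z' => u (qc q ((dD2 : ℝ) / (k₂ : ℝ) + 1) * t) z' ε) z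
    + ∑ ℓ ∈ Finset.Icc 1 (D - 1),
        ε ^ (Δ ℓ) * t ^ (d ℓ) *
          (c ℓ (qc q (δ' ℓ) * t) z ε * Pdz (Rl ℓ) (fun z' => u (qc q (δ' ℓ) * t) z' ε) z)
    + f ((q : ℂ) * t) z ε

/-- The first auxiliary equation in the `q`-Borel plane of order `k₁` (equation (23)). -/
def borelEq1 (q : ℝ) (k₁ k₂ : ℕ) (D p₁ : ℕ) (dD1 dD2 : ℕ) (d δ' Δ : ℕ → ℕ)
    (Qp RD1 RD2 : Polynomial ℂ) (Rl : ℕ → Polynomial ℂ)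
    (C : ℕ → ℕ → ℝ → ℂ) (Ψ : ℂ → ℝ → ℂ) (ε : ℂ)
    (w : ℂ → ℝ → ℂ) (τ : ℂ) (m : ℝ) : Prop :=
  Qp.eval (Complex.I * (m : ℂ)) *
      (τ ^ k₁ / qc q (((k₁ : ℝ) * ((k₁ : ℝ) - 1)) / (2 * (k₁ : ℝ)))) * w τ m
    = RD1.eval (Complex.I * (m : ℂ)) *
        (τ ^ (dD1 + k₁) /
          qc q ((((dD1 : ℝ) + (k₁ : ℝ)) * ((dD1 : ℝ) + (k₁ : ℝ) - 1)) / (2 * (k₁ : ℝ)))) * w τ m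
    + RD2.eval (Complex.I * (m : ℂ)) *
        (τ ^ (dD2 + k₁) /
          qc q ((((dD2 : ℝ) + (k₁ : ℝ)) * ((dD2 : ℝ) + (k₁ : ℝ) - 1)) / (2 * (k₁ : ℝ)))) *
        w (qc q ((dD2 : ℝ) * (1 / (k₂ : ℝ) - 1 / (k₁ : ℝ))) * τ) m
    + (τ ^ k₁ / qc q (((k₁ : ℝ) * ((k₁ : ℝ) - 1)) / (2 * (k₁ : ℝ)))) * Ψ τ m
    + ∑ ℓ ∈ Finset.Icc 1 (D - 1),
        ε ^ (Δ ℓ - d ℓ) *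
          (τ ^ (d ℓ + k₁) /
            qc q ((((d ℓ : ℝ) + (k₁ : ℝ)) * ((d ℓ : ℝ) + (k₁ : ℝ) - 1)) / (2 * (k₁ : ℝ)))) *
          (((Real.sqrt (2 * Real.pi) : ℝ) : ℂ)⁻¹ *
            qConv q (k₁ : ℝ) p₁ (Rl ℓ) (C ℓ)
              w (qc q ((δ' ℓ : ℝ) - (d ℓ : ℝ) / (k₁ : ℝ) - 1) * τ) m)

/-- The second auxiliary equation in the `q`-Borel plane of order `k₂` (equation (33)). -/
def borelEq2 (q : ℝ) (k₁ k₂ : ℕ) (D p₁ : ℕ) (dD1 dD2 : ℕ) (d δ' Δ : ℕ → ℕ)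
    (Qp RD1 RD2 : Polynomial ℂ) (Rl : ℕ → Polynomial ℂ)
    (C : ℕ → ℕ → ℝ → ℂ) (Ψ₂ : ℂ → ℝ → ℂ) (ε : ℂ)
    (w : ℂ → ℝ → ℂ) (τ : ℂ) (m : ℝ) : Prop :=
  Qp.eval (Complex.I * (m : ℂ)) *
      (τ ^ k₂ / qc q (((k₂ : ℝ) * ((k₂ : ℝ) - 1)) / (2 * (k₂ : ℝ)))) * w τ m
    = RD1.eval (Complex.I * (m : ℂ)) *
        (τ ^ (dD1 + k₂) /
          qc q ((((dD1 : ℝ) + (k₂ : ℝ)) * ((dD1 : ℝ) + (k₂ : ℝ) - 1)) / (2 * (k₂ : ℝ)))) *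
        w (qc q ((dD1 : ℝ) * (1 / (k₁ : ℝ) - 1 / (k₂ : ℝ))) * τ) m
    + RD2.eval (Complex.I * (m : ℂ)) *
        (τ ^ (dD2 + k₂) /
          qc q ((((dD2 : ℝ) + (k₂ : ℝ)) * ((dD2 : ℝ) + (k₂ : ℝ) - 1)) / (2 * (k₂ : ℝ)))) * w τ m
    + (τ ^ k₂ / qc q (((k₂ : ℝ) * ((k₂ : ℝ) - 1)) / (2 * (k₂ : ℝ)))) * Ψ₂ τ m
    + ∑ ℓ ∈ Finset.Icc 1 (D - 1),
        ε ^ (Δ ℓ - d ℓ) *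
          (τ ^ (d ℓ + k₂) /
            qc q ((((d ℓ : ℝ) + (k₂ : ℝ)) * ((d ℓ : ℝ) + (k₂ : ℝ) - 1)) / (2 * (k₂ : ℝ)))) *
          (((Real.sqrt (2 * Real.pi) : ℝ) : ℂ)⁻¹ *
            qConv q (k₂ : ℝ) p₁ (Rl ℓ) (C ℓ)
              w (qc q ((δ' ℓ : ℝ) - (d ℓ : ℝ) / (k₂ : ℝ) - 1) * τ) m)



/-- Integrability of `(1+|t|)^(-r)` on `ℝ` for `r > 1`. -/
lemma integrable_one_add_abs {r : ℝ} (hr : 1 < r) :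
    Integrable (fun t : ℝ => (1 + |t|) ^ (-r)) := by
  have : (Module.finrank ℝ ℝ : ℝ) < r := by rw [Module.finrank_self]; exact_mod_cast hr
  simpa [Real.norm_eq_abs] using integrable_one_add_norm (μ := (volume : Measure ℝ)) this

/-- Generic upper bound for a polynomial evaluated at `I*m`. -/
lemma polyEval_le (p : Polynomial ℂ) (m : ℝ) :
    ‖(p.eval (Complex.I * m))‖ ≤
      (∑ i ∈ Finset.range (p.natDegree + 1), ‖(p.coeff i)‖) *
        (1 + |m|) ^ p.natDegree := by
  rw [Polynomial.eval_eq_sum_range, Finset.sum_mul]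
  refine (norm_sum_le _ _).trans (Finset.sum_le_sum fun i hi => ?_)
  rw [norm_mul, norm_pow, norm_mul, Complex.norm_I, one_mul, Complex.norm_real, Real.norm_eq_abs]
  have h1 : |m| ^ i ≤ (1 + |m|) ^ i :=
    pow_le_pow_left₀ (abs_nonneg m) (by linarith [abs_nonneg m]) i
  have h2 : (1 + |m|) ^ i ≤ (1 + |m|) ^ p.natDegree :=
    pow_le_pow_right₀ (by linarith [abs_nonneg m]) (by
      have := Finset.mem_range.mp hi; omega)
  have h0 : (0:ℝ) ≤ ‖(p.coeff i)‖ := norm_nonneg _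
  calc ‖(p.coeff i)‖ * |m| ^ i
      ≤ ‖(p.coeff i)‖ * (1 + |m|) ^ p.natDegree := by
        exact mul_le_mul_of_nonneg_left (h1.trans h2) h0
    _ = _ := rfl


lemma polyEval_le' (p : Polynomial ℂ) {z : ℂ} (hz : 1 ≤ ‖z‖) {n : ℕ}
    (hn : p.natDegree ≤ n) :
    ‖(p.eval z)‖ ≤
      (∑ i ∈ Finset.range (p.natDegree + 1), ‖(p.coeff i)‖) * ‖z‖ ^ n := by
  rw [Polynomial.eval_eq_sum_range, Finset.sum_mul]
  refine (norm_sum_le _ _).trans (Finset.sum_le_sum fun i hi => ?_)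
  rw [norm_mul, norm_pow]
  refine mul_le_mul_of_nonneg_left ?_ (norm_nonneg _)
  exact pow_le_pow_right₀ hz (by have := Finset.mem_range.mp hi; omega)

/-- Lower bound for `|R(im)|` against `(1+|m|)^n`, `n ≤ deg R`. -/
lemma Rlow (R : Polynomial ℂ) (hR : ∀ m : ℝ, R.eval (Complex.I * m) ≠ 0) {n : ℕ}
    (hn : n ≤ R.natDegree) :
    ∃ c : ℝ, 0 < c ∧ ∀ m : ℝ,
      ((1 + |m|) ^ n : ℝ) ≤ c * ‖(R.eval (Complex.I * m))‖ := by
  have hcont : Continuous fun m : ℝ => ‖(R.eval (Complex.I * m))‖ :=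
    continuous_norm.comp (R.continuous.comp (continuous_const.mul Complex.continuous_ofReal))
  set dR := R.natDegree with hdR
  set lc := R.leadingCoeff with hlc
  have hR0 : R ≠ 0 := fun h => hR 0 (by simp [h])
  have hlc0 : lc ≠ 0 := Polynomial.leadingCoeff_ne_zero.mpr hR0
  have hlcpos : 0 < ‖lc‖ := by simpa using hlc0
  set T := R.eraseLead with hT
  set CT : ℝ := ∑ i ∈ Finset.range (T.natDegree + 1), ‖(T.coeff i)‖ with hCT
  have hCT0 : 0 ≤ CT := Finset.sum_nonneg fun i _ => norm_nonneg _
  set M : ℝ := max 1 (2 * CT / ‖lc‖) with hM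
  have hM1 : (1:ℝ) ≤ M := le_max_left _ _
  -- large |m| bound
  have hbig : ∀ m : ℝ, M ≤ |m| →
      ‖lc‖ / 2 * |m| ^ dR ≤ ‖(R.eval (Complex.I * m))‖ := by
    intro m hm
    set z : ℂ := Complex.I * m with hz
    have hzabs : ‖z‖ = |m| := by simp [hz]
    have hz1 : (1:ℝ) ≤ ‖z‖ := by rw [hzabs]; exact hM1.trans hm
    rcases Nat.eq_zero_or_pos dR with h0 | hpos
    · -- degree 0 : R is constant
      have hC : R = Polynomial.C (R.coeff 0) := Polynomial.eq_C_of_natDegree_eq_zero (by omega)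
      have hlceq : lc = R.coeff 0 := by rw [hlc, Polynomial.leadingCoeff, ← hdR, h0]
      rw [hC]
      simp only [Polynomial.eval_C, h0, pow_zero, mul_one]
      rw [hlceq]
      linarith [norm_nonneg (R.coeff 0)]
    · have hsplit : R.eval z = T.eval z + lc * z ^ dR := by
        conv_lhs => rw [← R.eraseLead_add_C_mul_X_pow]
        rw [Polynomial.eval_add, Polynomial.eval_mul, Polynomial.eval_C, Polynomial.eval_pow,
          Polynomial.eval_X]
      have hTn : T.natDegree ≤ dR - 1 := R.eraseLead_natDegree_le
      have hTbound : ‖(T.eval z)‖ ≤ CT * |m| ^ (dR - 1) := by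
        have := polyEval_le' T hz1 hTn
        rwa [hzabs] at this
      have htri : ‖lc‖ * |m| ^ dR
          ≤ ‖(R.eval z)‖ + ‖(T.eval z)‖ := by
        have h1 : ‖lc‖ * |m| ^ dR = ‖(R.eval z - T.eval z)‖ := by
          rw [hsplit, show T.eval z + lc * z ^ dR - T.eval z = lc * z ^ dR by ring,
            norm_mul, norm_pow, hzabs]
        rw [h1]
        have h2 := norm_add_le (R.eval z) (-(T.eval z))
        simpa [sub_eq_add_neg] using h2
      have h1m : (1:ℝ) ≤ |m| := hM1.trans hm
      have hmM : 2 * CT / ‖lc‖ ≤ |m| := (le_max_right _ _).trans hm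
      have hCTle : CT ≤ ‖lc‖ / 2 * |m| := by
        rw [div_le_iff₀ hlcpos] at hmM; nlinarith
      have hstep : CT * |m| ^ (dR - 1) ≤ ‖lc‖ / 2 * |m| ^ dR := by
        have hpow : |m| * |m| ^ (dR - 1) = |m| ^ dR := by
          rw [← pow_succ']; congr 1; omega
        calc CT * |m| ^ (dR - 1) ≤ (‖lc‖ / 2 * |m|) * |m| ^ (dR - 1) :=
              mul_le_mul_of_nonneg_right hCTle (by positivity)
          _ = ‖lc‖ / 2 * |m| ^ dR := by rw [mul_assoc, hpow]
      linarith
  -- compact part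
  obtain ⟨m₀, hm₀K, hm₀⟩ := (isCompact_Icc (a := -M) (b := M)).exists_isMinOn
    ⟨0, by rw [Set.mem_Icc]; constructor <;> linarith⟩ hcont.continuousOn
  set c₀ : ℝ := ‖(R.eval (Complex.I * m₀))‖ with hc₀
  have hc₀pos : 0 < c₀ := norm_pos_iff.mpr (hR m₀)
  set c : ℝ := max ((1 + M) ^ n / c₀) (2 ^ n * (2 / ‖lc‖)) with hc
  have hcpos : 0 < c := lt_max_iff.mpr (Or.inl (by positivity))
  refine ⟨c, hcpos, fun m => ?_⟩
  have habs : (0:ℝ) ≤ ‖(R.eval (Complex.I * m))‖ := norm_nonneg _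
  rcases le_or_gt |m| M with hsmall | hbig'
  · have hmem : m ∈ Icc (-M) M := abs_le.mp hsmall
    have hc₀le : c₀ ≤ ‖(R.eval (Complex.I * m))‖ := hm₀ hmem
    calc ((1 + |m|) ^ n : ℝ) ≤ (1 + M) ^ n :=
          pow_le_pow_left₀ (by positivity) (by linarith [abs_nonneg m]) n
      _ = ((1 + M) ^ n / c₀) * c₀ := by field_simp
      _ ≤ c * ‖(R.eval (Complex.I * m))‖ :=
          mul_le_mul (le_max_left _ _) hc₀le hc₀pos.le hcpos.le
  · have hm : M ≤ |m| := hbig'.le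
    have h1m : (1:ℝ) ≤ |m| := hM1.trans hm
    have hkey := hbig m hm
    have hpowle : |m| ^ dR ≤ 2 / ‖lc‖ * ‖(R.eval (Complex.I * m))‖ := by
      rw [div_mul_eq_mul_div, le_div_iff₀ hlcpos]
      nlinarith
    calc ((1 + |m|) ^ n : ℝ) ≤ (2 * |m|) ^ n :=
          pow_le_pow_left₀ (by positivity) (by linarith) n
      _ = 2 ^ n * |m| ^ n := mul_pow 2 |m| n
      _ ≤ 2 ^ n * |m| ^ dR :=
          mul_le_mul_of_nonneg_left (pow_le_pow_right₀ h1m hn) (by positivity)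
      _ ≤ 2 ^ n * (2 / ‖lc‖ * ‖(R.eval (Complex.I * m))‖) :=
          mul_le_mul_of_nonneg_left hpowle (by positivity)
      _ = (2 ^ n * (2 / ‖lc‖)) * ‖(R.eval (Complex.I * m))‖ := by ring
      _ ≤ c * ‖(R.eval (Complex.I * m))‖ :=
          mul_le_mul_of_nonneg_right (le_max_right _ _) habs


/-- The core peak-splitting inequality. -/
lemma core_ineq {μ dd A u v : ℝ} (hdd : 0 ≤ dd) (hdμ : dd ≤ μ) (hA : 0 ≤ A)
    (hu : 0 ≤ u) (hv : 0 ≤ v) (hsum : A ≤ u + v) :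
    (1 + A) ^ (μ - dd) * ((1 + u) ^ (-μ) * (1 + v) ^ (dd - μ))
      ≤ 2 ^ (μ - dd) * ((1 + u) ^ (-μ) + (1 + v) ^ (dd - μ)) := by
  have h2 : (0:ℝ) < 2 := by norm_num
  have hu1 : (0:ℝ) < 1 + u := by linarith
  have hv1 : (0:ℝ) < 1 + v := by linarith
  have hune : (0:ℝ) ≤ (1 + u) ^ (-μ) := Real.rpow_nonneg hu1.le _
  have hvne : (0:ℝ) ≤ (1 + v) ^ (dd - μ) := Real.rpow_nonneg hv1.le _
  rcases le_total v u with hvu | huv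
  · have hA2 : (1:ℝ) + A ≤ 2 * (1 + u) := by linarith
    have h5 : (1 + A) ^ (μ - dd) ≤ (2 * (1 + u)) ^ (μ - dd) :=
      Real.rpow_le_rpow (by linarith) hA2 (by linarith)
    have h6 : ((2:ℝ) * (1 + u)) ^ (μ - dd) = 2 ^ (μ - dd) * (1 + u) ^ (μ - dd) :=
      Real.mul_rpow (by norm_num) hu1.le
    calc (1 + A) ^ (μ - dd) * ((1 + u) ^ (-μ) * (1 + v) ^ (dd - μ))
        ≤ (2 ^ (μ - dd) * (1 + u) ^ (μ - dd)) * ((1 + u) ^ (-μ) * (1 + v) ^ (dd - μ)) := by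
          rw [← h6]
          exact mul_le_mul_of_nonneg_right h5 (by positivity)
      _ = 2 ^ (μ - dd) * (((1 + u) ^ (μ - dd) * (1 + u) ^ (-μ)) * (1 + v) ^ (dd - μ)) := by
          ring
      _ = 2 ^ (μ - dd) * ((1 + u) ^ (-dd) * (1 + v) ^ (dd - μ)) := by
          rw [← Real.rpow_add hu1]; ring_nf
      _ ≤ 2 ^ (μ - dd) * (1 * (1 + v) ^ (dd - μ)) := by
          refine mul_le_mul_of_nonneg_left (mul_le_mul_of_nonneg_right ?_ hvne) (by positivity)
          exact Real.rpow_le_one_of_one_le_of_nonpos (by linarith) (by linarith)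
      _ ≤ 2 ^ (μ - dd) * ((1 + u) ^ (-μ) + (1 + v) ^ (dd - μ)) := by
          rw [one_mul]
          exact mul_le_mul_of_nonneg_left (le_add_of_nonneg_left hune) (by positivity)
  · have hA2 : (1:ℝ) + A ≤ 2 * (1 + v) := by linarith
    have h5 : (1 + A) ^ (μ - dd) ≤ (2 * (1 + v)) ^ (μ - dd) :=
      Real.rpow_le_rpow (by linarith) hA2 (by linarith)
    have h6 : ((2:ℝ) * (1 + v)) ^ (μ - dd) = 2 ^ (μ - dd) * (1 + v) ^ (μ - dd) :=
      Real.mul_rpow (by norm_num) hv1.le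
    calc (1 + A) ^ (μ - dd) * ((1 + u) ^ (-μ) * (1 + v) ^ (dd - μ))
        ≤ (2 ^ (μ - dd) * (1 + v) ^ (μ - dd)) * ((1 + u) ^ (-μ) * (1 + v) ^ (dd - μ)) := by
          rw [← h6]
          exact mul_le_mul_of_nonneg_right h5 (by positivity)
      _ = 2 ^ (μ - dd) * ((1 + u) ^ (-μ) * ((1 + v) ^ (μ - dd) * (1 + v) ^ (dd - μ))) := by
          ring
      _ = 2 ^ (μ - dd) * ((1 + u) ^ (-μ) * 1) := by
          rw [← Real.rpow_add hv1, show μ - dd + (dd - μ) = 0 by ring, Real.rpow_zero]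
      _ ≤ 2 ^ (μ - dd) * ((1 + u) ^ (-μ) + (1 + v) ^ (dd - μ)) := by
          rw [mul_one]
          exact mul_le_mul_of_nonneg_left (le_add_of_nonneg_right hvne) (by positivity)

lemma mWeight_pos (β μ m : ℝ) : 0 < mWeight β μ m := by
  unfold mWeight; positivity

lemma one_le_mWeight {β μ : ℝ} (hβ : 0 ≤ β) (hμ : 0 ≤ μ) (m : ℝ) : 1 ≤ mWeight β μ m := by
  unfold mWeight
  have h1 : (1:ℝ) ≤ (1 + |m|) ^ μ :=
    Real.one_le_rpow (by linarith [abs_nonneg m]) hμ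
  have h2 : (1:ℝ) ≤ Real.exp (β * |m|) :=
    Real.one_le_exp (by positivity)
  nlinarith

lemma Enorm_nonneg (β μ : ℝ) (h : ℝ → ℂ) : 0 ≤ Enorm β μ h :=
  Real.sSup_nonneg (by
    rintro x ⟨m, rfl⟩
    exact mul_nonneg (mWeight_pos β μ m).le (norm_nonneg _))

lemma le_Enorm {β μ : ℝ} {h : ℝ → ℂ} (hb : BddAbove (EnormSet β μ h)) (m : ℝ) :
    mWeight β μ m * ‖(h m)‖ ≤ Enorm β μ h :=
  le_csSup hb ⟨m, rfl⟩

/-- Pointwise decay bound from membership in `E_{(β,μ)}`. -/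
lemma memE_pointwise {β μ : ℝ} {h : ℝ → ℂ} (hb : BddAbove (EnormSet β μ h)) (s : ℝ) :
    ‖(h s)‖ ≤ Enorm β μ h * ((1 + |s|) ^ (-μ) * Real.exp (-(β * |s|))) := by
  have h1 := le_Enorm hb s
  have hw : 0 < mWeight β μ s := mWeight_pos β μ s
  have hinv : (1 + |s|) ^ (-μ) * Real.exp (-(β * |s|)) = (mWeight β μ s)⁻¹ := by
    unfold mWeight
    rw [mul_inv, ← Real.rpow_neg (by positivity), ← Real.exp_neg]
  rw [hinv]
  calc ‖(h s)‖ = (mWeight β μ s * ‖(h s)‖) * (mWeight β μ s)⁻¹ := by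
        field_simp
    _ ≤ Enorm β μ h * (mWeight β μ s)⁻¹ :=
        mul_le_mul_of_nonneg_right h1 (by positivity)


set_option maxHeartbeats 2000000 in
/-- continuity of the convolution product `⋆^{b,Q}` on `E_{(β,μ)}`. -/
theorem statement0
    (q β μ : ℝ) (hq : 1 < q) (hβ : 0 < β) (hμ : 0 < μ)
    (Q R : Polynomial ℂ)
    (hdeg : Q.natDegree ≤ R.natDegree)
    (hR : ∀ m : ℝ, R.eval (Complex.I * (m : ℂ)) ≠ 0)
    (hμQ : (Q.natDegree : ℝ) + 1 < μ) :
    ∃ C₂ : ℝ, 0 < C₂ ∧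
      ∀ b : ℝ → ℂ, Continuous b →
        (∀ m : ℝ, ‖(b m)‖ ≤ 1 / ‖(R.eval (Complex.I * (m : ℂ)))‖) →
        ∀ f g : ℝ → ℂ, MemE β μ f → MemE β μ g →
          MemE β μ (fun m => b m * starQ Q f g m) ∧
          Enorm β μ (fun m => b m * starQ Q f g m) ≤ C₂ * Enorm β μ f * Enorm β μ g := by
  classical
  set d := Q.natDegree with hd
  set dd : ℝ := (d : ℝ) with hdd
  have hdd0 : (0:ℝ) ≤ dd := Nat.cast_nonneg d
  have hddμ : dd ≤ μ := by rw [hdd]; linarith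
  have hμ1 : 1 < μ := by linarith [hdd0]
  have hμd1 : 1 < μ - dd := by rw [hdd]; linarith
  set CQ : ℝ := ∑ i ∈ Finset.range (d + 1), ‖(Q.coeff i)‖ with hCQ
  have hCQ0 : 0 ≤ CQ := Finset.sum_nonneg fun i _ => norm_nonneg _
  obtain ⟨cR, hcR, hcRle⟩ := Rlow R hR hdeg
  have hint1 : Integrable (fun t : ℝ => (1 + |t|) ^ (-μ)) := integrable_one_add_abs hμ1
  have hint2 : Integrable (fun t : ℝ => (1 + |t|) ^ (dd - μ)) := by
    have h := integrable_one_add_abs hμd1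
    simpa [show -(μ - dd) = dd - μ by ring] using h
  set I1 : ℝ := ∫ t : ℝ, (1 + |t|) ^ (-μ) with hI1
  set I2 : ℝ := ∫ t : ℝ, (1 + |t|) ^ (dd - μ) with hI2
  have hI1n : 0 ≤ I1 := integral_nonneg fun t => Real.rpow_nonneg (by positivity) _
  have hI2n : 0 ≤ I2 := integral_nonneg fun t => Real.rpow_nonneg (by positivity) _
  set K : ℝ := cR * CQ * 2 ^ (μ - dd) * (I1 + I2) with hK
  have hK0 : 0 ≤ K := by positivity
  refine ⟨K + 1, by positivity, ?_⟩
  intro b hbcont hble f g hf hg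
  obtain ⟨hfc, hfb⟩ := hf
  obtain ⟨hgc, hgb⟩ := hg
  set Nf := Enorm β μ f with hNf
  set Ng := Enorm β μ g with hNg
  have hNf0 : 0 ≤ Nf := Enorm_nonneg _ _ _
  have hNg0 : 0 ≤ Ng := Enorm_nonneg _ _ _
  -- bound on Q values
  have hQ' : ∀ t : ℝ, ‖(Q.eval (Complex.I * t))‖ ≤ CQ * (1 + |t|) ^ dd := by
    intro t
    have h := polyEval_le Q t
    rw [hdd, Real.rpow_natCast]
    exact h
  -- bound on g values without exponential
  have hg' : ∀ t : ℝ, ‖(g t)‖ ≤ Ng * (1 + |t|) ^ (-μ) := by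
    intro t
    refine (memE_pointwise hgb t).trans ?_
    refine mul_le_mul_of_nonneg_left ?_ hNg0
    have h1 : Real.exp (-(β * |t|)) ≤ 1 := Real.exp_le_one_iff.mpr (neg_nonpos.mpr (by positivity))
    calc (1 + |t|) ^ (-μ) * Real.exp (-(β * |t|)) ≤ (1 + |t|) ^ (-μ) * 1 :=
          mul_le_mul_of_nonneg_left h1 (Real.rpow_nonneg (by positivity) _)
      _ = (1 + |t|) ^ (-μ) := mul_one _
  -- the key pointwise (in m) bound
  have hmain : ∀ m : ℝ, mWeight β μ m * ‖(b m * starQ Q f g m)‖ ≤ K * Nf * Ng := by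
    intro m
    have hb' : ‖(b m)‖ ≤ cR * ((1 + |m|) ^ dd)⁻¹ := by
      have h2 := hcRle m
      have hRp : 0 < ‖(R.eval (Complex.I * m))‖ := norm_pos_iff.mpr (hR m)
      have hp' : (0:ℝ) < (1 + |m|) ^ d := by positivity
      rw [hdd, Real.rpow_natCast]
      calc ‖(b m)‖ ≤ 1 / ‖(R.eval (Complex.I * m))‖ := hble m
        _ ≤ cR / ((1 + |m|) ^ d : ℝ) := by
            rw [div_le_div_iff₀ hRp hp']
            calc 1 * (1 + |m|) ^ d = (1 + |m|) ^ d := one_mul _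
              _ ≤ cR * ‖(R.eval (Complex.I * m))‖ := h2
        _ = cR * (((1 + |m|) ^ d : ℝ))⁻¹ := div_eq_mul_inv _ _
    -- pointwise in t
    have hptwise : ∀ t : ℝ,
        (mWeight β μ m * ‖(b m)‖) *
          ‖(f (m - t) * Q.eval (Complex.I * t) * g t)‖
        ≤ (cR * CQ * Nf * Ng * 2 ^ (μ - dd)) *
            ((1 + |m - t|) ^ (-μ) + (1 + |t|) ^ (dd - μ)) := by
      intro t
      have hfb' := memE_pointwise hfb (m - t)
      have hgb' := memE_pointwise hgb t
      have hsum : |m| ≤ |m - t| + |t| := by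
        calc |m| = |(m - t) + t| := by ring_nf
          _ ≤ |m - t| + |t| := abs_add_le _ _
      have core := core_ineq hdd0 hddμ (abs_nonneg m) (abs_nonneg (m - t)) (abs_nonneg t) hsum
      have hexp : Real.exp (β * |m|) *
          (Real.exp (-(β * |m - t|)) * Real.exp (-(β * |t|))) ≤ 1 := by
        rw [← Real.exp_add, ← Real.exp_add, Real.exp_le_one_iff]
        nlinarith [hβ.le, abs_nonneg (m - t), abs_nonneg t]
      have e1 : (1 + |m|) ^ μ * ((1 + |m|) ^ dd)⁻¹ = (1 + |m|) ^ (μ - dd) := by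
        rw [Real.rpow_sub (by positivity), div_eq_mul_inv]
      have e2 : (1 + |t|) ^ dd * (1 + |t|) ^ (-μ) = (1 + |t|) ^ (dd - μ) := by
        rw [← Real.rpow_add (by positivity), sub_eq_add_neg]
      rw [norm_mul, norm_mul]
      have habsf : (0:ℝ) ≤ ‖(f (m - t))‖ := norm_nonneg _
      have habsq : (0:ℝ) ≤ ‖(Q.eval (Complex.I * t))‖ := norm_nonneg _
      have habsg : (0:ℝ) ≤ ‖(g t)‖ := norm_nonneg _
      have hwpos : 0 < mWeight β μ m := mWeight_pos β μ m
      calc (mWeight β μ m * ‖(b m)‖) *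
            (‖(f (m - t))‖ * ‖(Q.eval (Complex.I * t))‖ * ‖(g t)‖)
          ≤ (mWeight β μ m * (cR * ((1 + |m|) ^ dd)⁻¹)) *
            ((Nf * ((1 + |m - t|) ^ (-μ) * Real.exp (-(β * |m - t|)))) *
              (CQ * (1 + |t|) ^ dd) *
              (Ng * ((1 + |t|) ^ (-μ) * Real.exp (-(β * |t|))))) := by
            refine mul_le_mul (mul_le_mul_of_nonneg_left hb' hwpos.le) ?_ (by positivity) (by positivity)
            refine mul_le_mul (mul_le_mul hfb' (hQ' t) habsq (by positivity)) hgb' habsg (by positivity)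
        _ = (cR * CQ * Nf * Ng) *
              ((((1 + |m|) ^ μ * ((1 + |m|) ^ dd)⁻¹) *
                ((1 + |m - t|) ^ (-μ) * ((1 + |t|) ^ dd * (1 + |t|) ^ (-μ)))) *
               (Real.exp (β * |m|) * (Real.exp (-(β * |m - t|)) * Real.exp (-(β * |t|))))) := by
            rw [mWeight]
            ring
        _ = (cR * CQ * Nf * Ng) *
              (((1 + |m|) ^ (μ - dd) * ((1 + |m - t|) ^ (-μ) * (1 + |t|) ^ (dd - μ))) *
               (Real.exp (β * |m|) * (Real.exp (-(β * |m - t|)) * Real.exp (-(β * |t|))))) := by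
            rw [e1, e2]
        _ ≤ (cR * CQ * Nf * Ng) *
              ((2 ^ (μ - dd) * ((1 + |m - t|) ^ (-μ) + (1 + |t|) ^ (dd - μ))) * 1) := by
            refine mul_le_mul_of_nonneg_left ?_ (by positivity)
            refine mul_le_mul core hexp (by positivity) ?_
            positivity
        _ = (cR * CQ * Nf * Ng * 2 ^ (μ - dd)) *
              ((1 + |m - t|) ^ (-μ) + (1 + |t|) ^ (dd - μ)) := by ring
    -- integrate
    have hintm : Integrable (fun t : ℝ => (1 + |m - t|) ^ (-μ)) :=
      (hint1.comp_sub_left m : _)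
    have hG : Integrable (fun t : ℝ => (cR * CQ * Nf * Ng * 2 ^ (μ - dd)) *
        ((1 + |m - t|) ^ (-μ) + (1 + |t|) ^ (dd - μ))) := (hintm.add hint2).const_mul _
    have habs_int : ‖(starQ Q f g m)‖ ≤
        ∫ t, ‖(f (m - t) * Q.eval (Complex.I * t) * g t)‖ := by
      rw [starQ]
      exact norm_integral_le_integral_norm _
    have hIevalm : (∫ t : ℝ, (1 + |m - t|) ^ (-μ)) = I1 := by
      rw [hI1]
      exact integral_sub_left_eq_self (fun t : ℝ => (1 + |t|) ^ (-μ)) volume m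
    have hwb : (0:ℝ) ≤ mWeight β μ m * ‖(b m)‖ :=
      mul_nonneg (mWeight_pos β μ m).le (norm_nonneg _)
    calc mWeight β μ m * ‖(b m * starQ Q f g m)‖
        = (mWeight β μ m * ‖(b m)‖) * ‖(starQ Q f g m)‖ := by
          rw [norm_mul]; ring
      _ ≤ (mWeight β μ m * ‖(b m)‖) *
            ∫ t, ‖(f (m - t) * Q.eval (Complex.I * t) * g t)‖ :=
          mul_le_mul_of_nonneg_left habs_int hwb
      _ = ∫ t, (mWeight β μ m * ‖(b m)‖) *
            ‖(f (m - t) * Q.eval (Complex.I * t) * g t)‖ :=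
          (integral_const_mul _ _).symm
      _ ≤ ∫ t, (cR * CQ * Nf * Ng * 2 ^ (μ - dd)) *
            ((1 + |m - t|) ^ (-μ) + (1 + |t|) ^ (dd - μ)) := by
          refine integral_mono_of_nonneg (Filter.Eventually.of_forall fun t => ?_) hG
            (Filter.Eventually.of_forall hptwise)
          exact mul_nonneg hwb (norm_nonneg _)
      _ = (cR * CQ * Nf * Ng * 2 ^ (μ - dd)) * (I1 + I2) := by
          rw [integral_const_mul, integral_add hintm hint2, hIevalm]
      _ = K * Nf * Ng := by rw [hK]; ring
  -- bounded above
  have hbdd : BddAbove (EnormSet β μ fun m => b m * starQ Q f g m) := by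
    refine ⟨K * Nf * Ng, ?_⟩
    rintro x ⟨m, rfl⟩
    exact hmain m
  -- continuity
  have hh_cont : Continuous (fun t : ℝ => Q.eval (Complex.I * t) * g t) :=
    (Q.continuous.comp (continuous_const.mul Complex.continuous_ofReal)).mul hgc
  have hh_int : Integrable (fun t : ℝ => Q.eval (Complex.I * t) * g t) := by
    refine (hint2.const_mul (CQ * Ng)).mono' hh_cont.aestronglyMeasurable
      (Filter.Eventually.of_forall fun t => ?_)
    have e2 : (1 + |t|) ^ dd * (1 + |t|) ^ (-μ) = (1 + |t|) ^ (dd - μ) := by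
      rw [← Real.rpow_add (by positivity), sub_eq_add_neg]
    calc ‖Q.eval (Complex.I * t) * g t‖
        = ‖(Q.eval (Complex.I * t))‖ * ‖(g t)‖ := by
          rw [norm_mul]
      _ ≤ (CQ * (1 + |t|) ^ dd) * (Ng * (1 + |t|) ^ (-μ)) :=
          mul_le_mul (hQ' t) (hg' t) (norm_nonneg _) (by positivity)
      _ = CQ * Ng * ((1 + |t|) ^ dd * (1 + |t|) ^ (-μ)) := by ring
      _ = CQ * Ng * (1 + |t|) ^ (dd - μ) := by rw [e2]
  have hf_bdd : BddAbove (Set.range fun x => ‖f x‖) := by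
    refine ⟨Nf, ?_⟩
    rintro y ⟨x, rfl⟩
    show ‖f x‖ ≤ Nf
    have h1 : ‖f x‖ = ‖(f x)‖ := rfl
    have h2 : ‖(f x)‖ ≤ mWeight β μ x * ‖(f x)‖ :=
      le_mul_of_one_le_left (norm_nonneg _) (one_le_mWeight hβ.le hμ.le x)
    rw [h1]
    exact h2.trans (le_Enorm hfb x)
  have hstar_cont : Continuous (starQ Q f g) := by
    have heq : starQ Q f g =
        MeasureTheory.convolution (fun t : ℝ => Q.eval (Complex.I * t) * g t) f
          (ContinuousLinearMap.mul ℂ ℂ) volume := by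
      funext m
      rw [MeasureTheory.convolution_mul, starQ]
      congr 1
      funext t
      ring
    rw [heq]
    exact BddAbove.continuous_convolution_right_of_integrable _ hf_bdd hh_int hfc
  have hcont : Continuous fun m => b m * starQ Q f g m := hbcont.mul hstar_cont
  refine ⟨⟨hcont, hbdd⟩, ?_⟩
  refine csSup_le ⟨_, ⟨0, rfl⟩⟩ ?_
  rintro x ⟨m, rfl⟩
  refine (hmain m).trans ?_
  have : K * Nf * Ng ≤ (K + 1) * Nf * Ng := by nlinarith
  exact this

end Paper
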